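/- For every simple graph G, the chromatic number of S[G,2] equals the chromatic number of G: χ(S[G,2]) = χ(G). Moreover, if f : V(G) → Z/kZ is a proper k-coloring of G, then the map sending the vertex xy to f(x) + f(y) (mod k) and the contracted vertex {x,y}_2 to f(x) + f(y) (mod k) is a proper k-coloring of S[G,2]. -/

import Mathlib

variable {V : Type*}

/-- Adjacency of the generalized Sierpiński graph `S(G,t)` on words of length `t`:
`u` and `v` are adjacent iff there is an index `i` with `u j = v j` for `j < i`,
`u i` adjacent to `v i` in `G`, and `u j = v i`, `v j = u i` for `j > i`. -/
def sierAdj (G : SimpleGraph V) (t : ℕ) (u v : Fin t → V) : Prop :=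
  ∃ i : Fin t, (∀ j, j < i → u j = v j) ∧ G.Adj (u i) (v i) ∧
    ∀ j, i < j → u j = v i ∧ v j = u i

/-- The generalized Sierpiński graph `S(G,t)`. -/
def sier (G : SimpleGraph V) (t : ℕ) : SimpleGraph (Fin t → V) where
  Adj := sierAdj G t
  symm := by
    constructor
    rintro u v ⟨i, h1, h2, h3⟩
    exact ⟨i, fun j hj => (h1 j hj).symm, h2.symm,
      fun j hj => ⟨(h3 j hj).2, (h3 j hj).1⟩⟩
  loopless := by
    constructor
    rintro u ⟨i, h1, h2, h3⟩
    exact G.loopless.irrefl _ h2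

/-- `linkingAt G t p u v` : `uv` is a linking edge of `S(G,t)` appearing at
(0-indexed) position `p < t - 1`; in the paper's terminology this linking edge is
produced at step `t - p`, and its contraction is a vertex contracted at step `t - p`. -/
def linkingAt (G : SimpleGraph V) (t p : ℕ) (u v : Fin t → V) : Prop :=
  ∃ i : Fin t, i.val = p ∧ i.val + 1 < t ∧ (∀ j, j < i → u j = v j) ∧
    G.Adj (u i) (v i) ∧ ∀ j, i < j → u j = v i ∧ v j = u i

/-- `uv` is a linking edge of `S(G,t)` (an edge appearing at some step `≥ 2`). -/
def linking (G : SimpleGraph V) (t : ℕ) (u v : Fin t → V) : Prop :=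
  ∃ p, linkingAt G t p u v

/-- The equivalence relation on words generated by identifying the two endpoints
of each linking edge. -/
def gasketSetoid (G : SimpleGraph V) (t : ℕ) : Setoid (Fin t → V) :=
  Relation.EqvGen.setoid (linking G t)

/-- The generalized Sierpiński gasket graph `S[G,t]`, obtained from `S(G,t)` by
contracting all linking edges. -/
def gasket (G : SimpleGraph V) (t : ℕ) :
    SimpleGraph (Quotient (gasketSetoid G t)) where
  Adj x y := x ≠ y ∧ ∃ u v, Quotient.mk (gasketSetoid G t) u = x ∧
    Quotient.mk (gasketSetoid G t) v = y ∧ sierAdj G t u v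
  symm := by
    constructor
    rintro x y ⟨hxy, u, v, hu, hv, h⟩
    exact ⟨hxy.symm, v, u, hv, hu, (sier G t).adj_symm h⟩
  loopless := ⟨fun _ h => h.1 rfl⟩

/-- The expanded word `i j j ... j`; for `ij ∈ E(G)` its class in `S[G,t]` is the
contracted vertex `{i,j}_t`. -/
def topWord (t : ℕ) (i j : V) : Fin t → V := fun k => if k.val = 0 then i else j

section Aux

lemma linking2_iff (G : SimpleGraph V) (u v : Fin 2 → V) :
    linking G 2 u v ↔ G.Adj (u 0) (v 0) ∧ u 1 = v 0 ∧ v 1 = u 0 := by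
  constructor
  · rintro ⟨p, i, hip, hlt, _, hadj, hgt⟩
    have hi0 : i = 0 := by
      apply Fin.ext; simp only [Fin.val_zero]; omega
    subst hi0
    have h1 := hgt 1 (by decide)
    exact ⟨hadj, h1.1, h1.2⟩
  · rintro ⟨hadj, h1, h2⟩
    refine ⟨0, 0, rfl, by omega, ?_, hadj, ?_⟩
    · intro j hj; exact absurd hj (by simp [Fin.lt_def])
    · intro j hj
      have : j = 1 := by
        apply Fin.ext; have := j.isLt; simp only [Fin.lt_def, Fin.val_zero] at hj ⊢; omega
      subst this; exact ⟨h1, h2⟩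

lemma linking2_symm (G : SimpleGraph V) {u v : Fin 2 → V}
    (h : linking G 2 u v) : linking G 2 v u := by
  rw [linking2_iff] at h ⊢
  exact ⟨h.1.symm, h.2.2, h.2.1⟩

lemma fin2_ext {u v : Fin 2 → V} (h0 : u 0 = v 0) (h1 : u 1 = v 1) : u = v := by
  funext j; fin_cases j <;> assumption

lemma eqvGen_linking2 (G : SimpleGraph V) {u v : Fin 2 → V}
    (h : Relation.EqvGen (linking G 2) u v) : u = v ∨ linking G 2 u v := by
  induction h with
  | rel x y h => exact Or.inr h
  | refl x => exact Or.inl rfl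
  | symm x y _ ih =>
      rcases ih with h | h
      · exact Or.inl h.symm
      · exact Or.inr (linking2_symm G h)
  | trans x y z _ _ ih1 ih2 =>
      rcases ih1 with h1 | h1
      · rw [h1]; exact ih2
      · rcases ih2 with h2 | h2
        · rw [← h2]; exact Or.inr h1
        · rw [linking2_iff] at h1 h2
          left
          exact fin2_ext (by rw [← h1.2.2, h2.2.1]) (by rw [h1.2.1, ← h2.2.2])

lemma mk_eq_of_linking (G : SimpleGraph V) {u v : Fin 2 → V}
    (h : linking G 2 u v) :
    Quotient.mk (gasketSetoid G 2) u = Quotient.mk (gasketSetoid G 2) v :=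
  Quotient.sound (Relation.EqvGen.rel _ _ h)

/-- The key properness lemma. -/
lemma proper_lemma (G : SimpleGraph V) (k : ℕ) (f : V → ZMod k)
    (hf : ∀ a b, G.Adj a b → f a ≠ f b)
    (g : Quotient (gasketSetoid G 2) → ZMod k)
    (hg : ∀ u : Fin 2 → V, g (Quotient.mk (gasketSetoid G 2) u) = f (u 0) + f (u 1)) :
    ∀ x y, (gasket G 2).Adj x y → g x ≠ g y := by
  rintro x y ⟨hne, u, v, hu, hv, i, hlt, hadj, hgt⟩ heq
  subst hu hv
  rw [hg, hg] at heq
  have hi : i = 0 ∨ i = 1 := by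
    have h2 := i.isLt
    rcases (by omega : (i : ℕ) = 0 ∨ (i : ℕ) = 1) with h | h
    · exact Or.inl (Fin.ext h)
    · exact Or.inr (Fin.ext h)
  rcases hi with rfl | rfl
  · -- linking edge: endpoints identified, contradicting hne
    have h1 := hgt 1 (by decide)
    exact hne (mk_eq_of_linking G ((linking2_iff G u v).mpr ⟨hadj, h1.1, h1.2⟩))
  · -- ordinary edge within a copy of G
    have h0 : u 0 = v 0 := hlt 0 (by decide)
    rw [h0] at heq
    exact hf _ _ hadj (add_left_cancel heq)

/-- A coloring of `G` induces a coloring of the gasket with the same colors. -/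
noncomputable def gasketColoring (G : SimpleGraph V) (k : ℕ)
    (C : G.Coloring (ZMod k)) : (gasket G 2).Coloring (ZMod k) :=
  SimpleGraph.Coloring.mk
    (Quotient.lift (fun u : Fin 2 → V => C (u 0) + C (u 1)) (by
      intro u v h
      rcases eqvGen_linking2 G h with rfl | h
      · rfl
      · rw [linking2_iff] at h
        show C (u 0) + C (u 1) = C (v 0) + C (v 1)
        rw [h.2.1, h.2.2, add_comm]))
    (by
      intro a b hab
      exact proper_lemma G k C (fun x y h => C.valid h)
        (Quotient.lift (fun u : Fin 2 → V => C (u 0) + C (u 1)) (by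
          intro u v h
          rcases eqvGen_linking2 G h with rfl | h
          · rfl
          · rw [linking2_iff] at h
            show C (u 0) + C (u 1) = C (v 0) + C (v 1)
            rw [h.2.1, h.2.2, add_comm]))
        (fun u => rfl) a b hab)

/-- Embedding of `G` in the gasket, given a base vertex. -/
def gasketHom (G : SimpleGraph V) (a : V) : G →g gasket G 2 where
  toFun x := Quotient.mk (gasketSetoid G 2) (topWord 2 a x)
  map_rel' := by
    intro x y hxy
    refine ⟨?_, topWord 2 a x, topWord 2 a y, rfl, rfl, 1, ?_, ?_, ?_⟩
    · intro h
      rcases eqvGen_linking2 G (Quotient.exact h) with h | h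
      · have : x = y := congrFun h 1
        exact G.loopless.irrefl y (this ▸ hxy)
      · rw [linking2_iff] at h
        simp only [topWord] at h
        exact G.loopless.irrefl a h.1
    · intro j hj
      have : j = 0 := by
        apply Fin.ext; simp only [Fin.lt_def, Fin.val_one] at hj; omega
      subst this; rfl
    · simpa [topWord] using hxy
    · intro j hj
      exact absurd hj (by have := j.isLt; simp only [Fin.lt_def, Fin.val_one]; omega)

end Aux

/-- `χ(S[G,2]) = χ(G)`; moreover, if `f` is a proper `k`-coloring of `G`
with colors in `ZMod k`, then the map sending (the class of) the word `xy` — and in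
particular each contracted vertex `{x,y}_2` — to `f x + f y` is a proper coloring of
`S[G,2]`. -/
theorem stmt_14 (G : SimpleGraph V) :
    (gasket G 2).chromaticNumber = G.chromaticNumber ∧
    ∀ (k : ℕ) (f : V → ZMod k), (∀ a b, G.Adj a b → f a ≠ f b) →
      ∀ g : Quotient (gasketSetoid G 2) → ZMod k,
        (∀ u : Fin 2 → V, g (Quotient.mk (gasketSetoid G 2) u) = f (u 0) + f (u 1)) →
        ∀ x y, (gasket G 2).Adj x y → g x ≠ g y := by
  constructor
  · apply le_antisymm
    · apply SimpleGraph.chromaticNumber_le_of_forall_imp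
      intro n hc
      rcases Nat.eq_zero_or_pos n with rfl | hn
      · haveI : IsEmpty V := G.isEmpty_of_colorable_zero hc
        haveI : IsEmpty (Quotient (gasketSetoid G 2)) := by
          constructor
          intro x
          obtain ⟨u, -⟩ := x.exists_rep
          exact IsEmpty.false (u 0)
        exact SimpleGraph.Colorable.of_isEmpty (G := gasket G 2) 0
      · haveI : NeZero n := ⟨hn.ne'⟩
        have C := hc.toColoring (α := ZMod n) (by simp)
        have h2 := (gasketColoring G n C).colorable
        rwa [ZMod.card] at h2
    · apply SimpleGraph.chromaticNumber_le_of_forall_imp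
      intro n hc
      cases isEmpty_or_nonempty V with
      | inl h => exact SimpleGraph.Colorable.of_isEmpty (G := G) n
      | inr h => exact ⟨hc.some.comp (gasketHom G h.some)⟩
  · intro k f hf g hg
    exact proper_lemma G k f hf g hg
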